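/- Let R be a commutative ring, a ≤ b integers, and K a cochain complex of R-modules such that Kⁱ is finitely generated projective for a ≤ i ≤ b and Kⁱ = 0 otherwise. If H^b(K) = 0, then there is a cochain complex K′ of R-modules with K′ⁱ finitely generated projective for a ≤ i ≤ b−1 and K′ⁱ = 0 otherwise, together with a quasi-isomorphism K′ → K (a chain map inducing isomorphisms on all cohomology modules). Concretely, one may take K′ to agree with K in degrees < b−1, take K′^{b−1} = ker(d^{b−1} : K^{b−1} → K^b), which is a finitely generated projective direct summand of K^{b−1}, and let K′ → K be the evident inclusion. -/

import Mathlib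

open CategoryTheory

namespace PerfAmpAux

variable {R : Type} [CommRing R]

/-- View a morphism in `ModuleCat` as a linear map. -/
def toLin {M N : ModuleCat R} (f : M ⟶ N) : M →ₗ[R] N := f.hom

@[simp] lemma toLin_apply {M N : ModuleCat R} (f : M ⟶ N) (x : M) : toLin f x = f x := rfl

section

variable (K : CochainComplex (ModuleCat R) ℤ) (n : ℤ)

/-- The degreewise submodules defining the truncated subcomplex. -/
noncomputable def S (i : ℤ) : Submodule R (K.X i) :=
  if i < n then ⊤ else if i = n then LinearMap.ker (toLin (K.d i (n + 1))) else ⊥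

lemma S_lt {i : ℤ} (h : i < n) : S K n i = ⊤ := if_pos h

lemma S_eq : S K n n = LinearMap.ker (toLin (K.d n (n + 1))) := by
  rw [S, if_neg (lt_irrefl n), if_pos rfl]

lemma S_gt {i : ℤ} (h : n < i) : S K n i = ⊥ := by
  rw [S, if_neg (by omega), if_neg (by omega)]

variable (s : K.X (n + 1) →ₗ[R] K.X n)

/-- The degreewise retraction (pre-projection) onto the subcomplex. -/
noncomputable def P (i : ℤ) : K.X i →ₗ[R] K.X i :=
  if i < n then LinearMap.id
  else if h : i = n then
    LinearMap.id - (toLin (eqToHom (congrArg K.X h.symm))) ∘ₗ s ∘ₗ toLin (K.d i (n + 1))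
  else 0

lemma P_lt {i : ℤ} (h : i < n) : P K n s i = LinearMap.id := if_pos h

lemma P_eq : P K n s n = LinearMap.id - s ∘ₗ toLin (K.d n (n + 1)) := by
  rw [P, if_neg (lt_irrefl n), dif_pos rfl]
  congr 1

lemma P_gt {i : ℤ} (h : n < i) : P K n s i = 0 := by
  rw [P, if_neg (by omega), dif_neg (by omega)]

lemma P_apply_eq (x : K.X n) : P K n s n x = x - s (K.d n (n + 1) x) := by
  rw [P_eq]
  simp

lemma mapsTo (i j : ℤ) (x : K.X i) (hx : x ∈ S K n i) : K.d i j x ∈ S K n j := by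
  by_cases hij : j = i + 1
  · subst hij
    rcases lt_trichotomy (i + 1) n with h1 | h1 | h1
    · rw [S_lt K n h1]
      trivial
    · subst h1
      rw [S_eq, LinearMap.mem_ker, toLin_apply]
      exact ConcreteCategory.congr_hom (K.d_comp_d i (i + 1) (i + 1 + 1)) x
    · rcases lt_trichotomy i n with h2 | h2 | h2
      · omega
      · subst h2
        rw [S_eq, LinearMap.mem_ker] at hx
        rw [S_gt K i h1, Submodule.mem_bot]
        exact hx
      · rw [S_gt K n h2, Submodule.mem_bot] at hx
        rw [hx, map_zero]
        exact Submodule.zero_mem _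
  · have h0 : K.d i j = 0 := K.shape i j (by simpa [ComplexShape.up_Rel] using fun h => hij h.symm)
    have : K.d i j x = 0 := by rw [h0]; rfl
    rw [this]
    exact Submodule.zero_mem _

lemma d_P (hds : ∀ y, K.d n (n + 1) (s y) = y) (i j : ℤ) (x : K.X i) :
    K.d i j (P K n s i x) = P K n s j (K.d i j x) := by
  by_cases hij : j = i + 1
  · subst hij
    rcases lt_trichotomy (i + 1) n with h1 | h1 | h1
    · rw [P_lt K n s (by omega), P_lt K n s h1]
      rfl
    · subst h1
      rw [P_lt K (i + 1) s (by omega), P_eq]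
      simp only [LinearMap.id_apply, LinearMap.sub_apply, LinearMap.comp_apply, toLin_apply]
      have hdd : K.d (i + 1) (i + 1 + 1) (K.d i (i + 1) x) = 0 :=
        ConcreteCategory.congr_hom (K.d_comp_d i (i + 1) (i + 1 + 1)) x
      rw [hdd, map_zero, sub_zero]
    · rcases lt_trichotomy i n with h2 | h2 | h2
      · omega
      · subst h2
        rw [P_eq, P_gt K i s h1]
        show K.d i (i + 1) (x - s (K.d i (i + 1) x)) = 0
        rw [map_sub, hds, sub_self]
      · rw [P_gt K n s h2, P_gt K n s (by omega)]
        rw [LinearMap.zero_apply, LinearMap.zero_apply, map_zero]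
  · have h0 : K.d i j = 0 := K.shape i j (by simpa [ComplexShape.up_Rel] using fun h => hij h.symm)
    have hz : ∀ y : K.X i, K.d i j y = 0 := fun y => by rw [h0]; rfl
    rw [hz, hz, map_zero]

lemma P_mem (hds : ∀ y, K.d n (n + 1) (s y) = y) (i : ℤ) (x : K.X i) :
    P K n s i x ∈ S K n i := by
  rcases lt_trichotomy i n with h1 | h1 | h1
  · rw [S_lt K n h1]
    trivial
  · subst h1
    rw [S_eq, LinearMap.mem_ker, toLin_apply, P_apply_eq, map_sub, hds]
    exact sub_self _
  · rw [P_gt K n s h1, S_gt K n h1, LinearMap.zero_apply]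
    exact Submodule.zero_mem _

lemma P_eq_self (i : ℤ) (x : K.X i) (hx : x ∈ S K n i) : P K n s i x = x := by
  rcases lt_trichotomy i n with h1 | h1 | h1
  · rw [P_lt K n s h1]
    rfl
  · subst h1
    rw [S_eq, LinearMap.mem_ker, toLin_apply] at hx
    rw [P_apply_eq, hx, map_zero, sub_zero]
  · rw [S_gt K n h1, Submodule.mem_bot] at hx
    rw [hx, map_zero]

/-- The truncated subcomplex. -/
noncomputable def Ktr : CochainComplex (ModuleCat R) ℤ where
  X i := ModuleCat.of R (S K n i)
  d i j := ModuleCat.ofHom ((toLin (K.d i j)).restrict (fun x hx => mapsTo K n i j x hx))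
  shape i j hij := by
    ext x
    have h0 : K.d i j = 0 := K.shape i j hij
    show K.d i j x.1 = 0
    rw [h0]
    rfl
  d_comp_d' i j k _ _ := by
    ext x
    exact ConcreteCategory.congr_hom (K.d_comp_d i j k) x.1

/-- The inclusion of the truncated subcomplex. -/
noncomputable def incl : Ktr K n ⟶ K where
  f i := ModuleCat.ofHom (S K n i).subtype
  comm' i j _ := by
    ext x
    rfl

/-- The retraction onto the truncated subcomplex. -/
noncomputable def retr (hds : ∀ y, K.d n (n + 1) (s y) = y) : K ⟶ Ktr K n where
  f i := ModuleCat.ofHom ((P K n s i).codRestrict (S K n i) (P_mem K n s hds i))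
  comm' i j _ := by
    ext x
    refine Subtype.ext ?_
    exact d_P K n s hds i j x

/-- The homotopy components. -/
noncomputable def hty (i j : ℤ) : K.X i ⟶ K.X j :=
  if hij : i = n + 1 ∧ j = n then
    -(eqToHom (congrArg K.X hij.1) ≫ (ModuleCat.ofHom s : K.X (n + 1) ⟶ K.X n) ≫ eqToHom (congrArg K.X hij.2).symm)
  else 0

lemma hty_eq : hty K n s (n + 1) n = -(ModuleCat.ofHom s : K.X (n + 1) ⟶ K.X n) := by
  rw [hty, dif_pos ⟨rfl, rfl⟩]
  simp

lemma hty_ne {i j : ℤ} (h : ¬(i = n + 1 ∧ j = n)) : hty K n s i j = 0 := dif_neg h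

end

end PerfAmpAux

/-- A perfect cochain complex of `R`-modules concentrated in degrees `[a, b]`
(finitely generated projective in each degree) whose top cohomology `H^b` vanishes is
quasi-isomorphic to a complex of finitely generated projective modules concentrated in
degrees `[a, b-1]`. -/
theorem perfect_amplitude_drop_of_top_cohomology_vanishes
    {R : Type} [CommRing R] (a b : ℤ) (hab : a ≤ b)
    (K : CochainComplex (ModuleCat R) ℤ)
    (hfin : ∀ i : ℤ, a ≤ i → i ≤ b →
      Module.Finite R (K.X i) ∧ Module.Projective R (K.X i))
    (hzero : ∀ i : ℤ, (i < a ∨ b < i) → Limits.IsZero (K.X i))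
    (hHb : Limits.IsZero (K.homology b)) :
    ∃ (K' : CochainComplex (ModuleCat R) ℤ) (φ : K' ⟶ K),
      (∀ i : ℤ, a ≤ i → i ≤ b - 1 →
        Module.Finite R (K'.X i) ∧ Module.Projective R (K'.X i)) ∧
      (∀ i : ℤ, (i < a ∨ b - 1 < i) → Limits.IsZero (K'.X i)) ∧
      QuasiIso φ := by
  classical
  obtain ⟨n, rfl⟩ : ∃ n : ℤ, b = n + 1 := ⟨b - 1, by ring⟩
  -- elements of `K.X i` for `i` out of range are zero
  have helt : ∀ (i : ℤ), (i < a ∨ n + 1 < i) → ∀ x : K.X i, x = 0 := by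
    intro i hi x
    have h1 : (𝟙 (K.X i) : K.X i ⟶ K.X i) = 0 := (hzero i hi).eq_of_src _ _
    calc x = (𝟙 (K.X i) : K.X i ⟶ K.X i) x := rfl
    _ = (0 : K.X i ⟶ K.X i) x := by rw [h1]
    _ = 0 := rfl
  -- the top differential is surjective
  have hdsurj : Function.Surjective (K.d n (n + 1)) := by
    have hex : K.ExactAt (n + 1) :=
      (K.exactAt_iff_isZero_homology (n + 1)).mpr hHb
    rw [K.exactAt_iff' n (n + 1) (n + 2)
      (by rw [CochainComplex.prev]; omega)
      (by rw [CochainComplex.next]; omega)] at hex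
    rw [ShortComplex.moduleCat_exact_iff] at hex
    intro y
    obtain ⟨x, hx⟩ := hex y (helt (n + 2) (by omega) _)
    exact ⟨x, hx⟩
  -- a splitting of the top differential
  have : Module.Projective R (K.X (n + 1)) := (hfin (n + 1) hab le_rfl).2
  obtain ⟨s, hs⟩ := Module.projective_lifting_property
    (PerfAmpAux.toLin (K.d n (n + 1))) LinearMap.id hdsurj
  have hds : ∀ y, K.d n (n + 1) (s y) = y := fun y => DFunLike.congr_fun hs y
  refine ⟨PerfAmpAux.Ktr K n, PerfAmpAux.incl K n, ?_, ?_, ?_⟩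
  · -- finiteness and projectivity
    intro i hia hib
    have hib' : i ≤ n := by omega
    have hfinK : Module.Finite R (K.X i) := (hfin i hia (by omega)).1
    have hprojK : Module.Projective R (K.X i) := (hfin i hia (by omega)).2
    rcases lt_or_eq_of_le hib' with h1 | h1
    · constructor
      · show Module.Finite R (PerfAmpAux.S K n i)
        rw [PerfAmpAux.S_lt K n h1]
        exact Module.Finite.equiv (Submodule.topEquiv (M := K.X i)).symm
      · show Module.Projective R (PerfAmpAux.S K n i)
        rw [PerfAmpAux.S_lt K n h1]
        exact Module.Projective.of_equiv (Submodule.topEquiv (M := K.X i)).symm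
    · subst h1
      -- the projection onto the kernel
      set π : K.X i →ₗ[R] LinearMap.ker (PerfAmpAux.toLin (K.d i (i + 1))) :=
        (PerfAmpAux.P K i s i).codRestrict _ (fun x => by
          have := PerfAmpAux.P_mem K i s hds i x
          rwa [PerfAmpAux.S_eq] at this) with hπ
      have hπs : ∀ x : LinearMap.ker (PerfAmpAux.toLin (K.d i (i + 1))), π x.1 = x := by
        intro x
        refine Subtype.ext ?_
        show PerfAmpAux.P K i s i x.1 = x.1
        refine PerfAmpAux.P_eq_self K i s i x.1 ?_
        rw [PerfAmpAux.S_eq]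
        exact x.2
      have hsurjπ : Function.Surjective π := fun y => ⟨y.1, hπs y⟩
      constructor
      · show Module.Finite R (PerfAmpAux.S K i i)
        rw [PerfAmpAux.S_eq]
        exact Module.Finite.of_surjective π hsurjπ
      · show Module.Projective R (PerfAmpAux.S K i i)
        rw [PerfAmpAux.S_eq]
        exact Module.Projective.of_split
          (LinearMap.ker (PerfAmpAux.toLin (K.d i (i + 1)))).subtype π
          (LinearMap.ext fun x => hπs x)
  · -- vanishing outside `[a, b-1]`
    intro i hi
    haveI hsub : Subsingleton (PerfAmpAux.S K n i) := by
      rcases hi with hi | hi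
      · constructor
        intro x y
        exact Subtype.ext (by rw [helt i (Or.inl hi) x.1, helt i (Or.inl hi) y.1])
      · rw [PerfAmpAux.S_gt K n (by omega)]
        infer_instance
    exact @ModuleCat.isZero_of_subsingleton R _ _ hsub
  · -- quasi-isomorphism via homotopy equivalence
    have hφr : PerfAmpAux.incl K n ≫ PerfAmpAux.retr K n s hds = 𝟙 (PerfAmpAux.Ktr K n) := by
      ext i x
      refine Subtype.ext ?_
      exact PerfAmpAux.P_eq_self K n s i x.1 x.2
    have H : Homotopy (PerfAmpAux.retr K n s hds ≫ PerfAmpAux.incl K n) (𝟙 K) := by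
      refine ⟨PerfAmpAux.hty K n s, ?_, ?_⟩
      · intro i j hij
        refine PerfAmpAux.hty_ne K n s ?_
        rintro ⟨rfl, rfl⟩
        exact hij (by simp [ComplexShape.up_Rel])
      · intro i
        have hrel : (ComplexShape.up ℤ).Rel i (i + 1) := by simp [ComplexShape.up_Rel]
        have hrel' : (ComplexShape.up ℤ).Rel (i - 1) i := by
          simp only [ComplexShape.up_Rel]; omega
        rw [dNext_eq _ hrel, prevD_eq _ hrel']
        rcases lt_trichotomy i n with h1 | h1 | h1
        · rw [PerfAmpAux.hty_ne K n s (by omega), PerfAmpAux.hty_ne K n s (by omega)]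
          simp only [Limits.comp_zero, Limits.zero_comp, add_zero, zero_add]
          ext x
          show PerfAmpAux.P K n s i x = x
          rw [PerfAmpAux.P_lt K n s h1]
          rfl
        · subst h1
          rw [PerfAmpAux.hty_eq K i s, PerfAmpAux.hty_ne K i s (by omega)]
          simp only [Limits.zero_comp, add_zero, Preadditive.comp_neg]
          ext x
          show PerfAmpAux.P K i s i x =
            (-((K.d i (i + 1) : K.X i ⟶ K.X (i + 1)) ≫ (ModuleCat.ofHom s : K.X (i + 1) ⟶ K.X i)) +
              (𝟙 K : K ⟶ K).f i) x
          rw [PerfAmpAux.P_apply_eq]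
          show x - s (K.d i (i + 1) x) = -(s (K.d i (i + 1) x)) + x
          abel
        · rcases lt_trichotomy i (n + 1) with h2 | h2 | h2
          · omega
          · subst h2
            have e1 : n + 1 - 1 = n := by omega
            rw [e1]
            rw [PerfAmpAux.hty_ne K n s (by omega), PerfAmpAux.hty_eq K n s]
            simp only [Limits.comp_zero, zero_add]
            ext x
            show PerfAmpAux.P K n s (n + 1) x = K.d n (n + 1) (-(s x)) + x
            rw [PerfAmpAux.P_gt K n s (by omega), map_neg, hds]
            show (0 : K.X (n + 1)) = -x + x
            simp
          · rw [PerfAmpAux.hty_ne K n s (by omega), PerfAmpAux.hty_ne K n s (by omega)]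
            simp only [Limits.comp_zero, Limits.zero_comp, add_zero, zero_add]
            ext x
            show PerfAmpAux.P K n s i x = x
            rw [PerfAmpAux.P_gt K n s (by omega), helt i (by omega) x]
            rfl
    obtain ⟨e, he⟩ : ∃ e : HomotopyEquiv (PerfAmpAux.Ktr K n) K,
        e.hom = PerfAmpAux.incl K n :=
      ⟨⟨PerfAmpAux.incl K n, PerfAmpAux.retr K n s hds, Homotopy.ofEq hφr, H⟩, rfl⟩
    rw [← he]
    infer_instance
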